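/- Let D be a digraph of order n ≥ 3, let C := x_1x_2…x_{n-1}x_1 be a cycle of length n−1 in D (subscripts modulo n−1), and let y be the vertex not on C. If D contains no Hamiltonian bypass and x_ky and yx_{k+1} are arcs of D for some k, then for every vertex x_i on C with x_i ≠ x_k, the arc x_{i+1}x_i is not in D. -/

import Mathlib

open Finset

variable {V : Type*}

/-- Out-degree of a vertex. -/
def outDeg [Fintype V] (A : V → V → Prop) [DecidableRel A] (v : V) : ℕ :=
  (Finset.univ.filter (fun u => A v u)).card

/-- In-degree of a vertex. -/
def inDeg [Fintype V] (A : V → V → Prop) [DecidableRel A] (v : V) : ℕ :=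
  (Finset.univ.filter (fun u => A u v)).card

/-- Degree of a vertex: out-degree plus in-degree. -/
def deg [Fintype V] (A : V → V → Prop) [DecidableRel A] (v : V) : ℕ :=
  outDeg A v + inDeg A v

/-- Two vertices are adjacent if there is an arc between them in some direction. -/
def Adj (A : V → V → Prop) (u v : V) : Prop := A u v ∨ A v u

/-- Condition (*): for every pair of non-adjacent vertices with a common in-neighbour,
`min {d(x), d(y)} ≥ n - 1` and `d(x) + d(y) ≥ 2n - 1`. -/
def CondStar [Fintype V] (A : V → V → Prop) [DecidableRel A] : Prop :=
  ∀ x y : V, x ≠ y → ¬ Adj A x y → (∃ z : V, A z x ∧ A z y) →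
    min (deg A x) (deg A y) ≥ Fintype.card V - 1 ∧
    deg A x + deg A y ≥ 2 * Fintype.card V - 1

/-- A Hamiltonian bypass: an ordering `x₁, …, xₙ` of all vertices such that
`x₁x₂, …, x_{n-1}xₙ` and `x₁xₙ` are all arcs. -/
def HamBypass (A : V → V → Prop) : Prop :=
  ∃ l : List V, l.Nodup ∧ (∀ v : V, v ∈ l) ∧ l.Chain' A ∧
    ∃ a b : V, l.head? = some a ∧ l.getLast? = some b ∧ A a b

theorem stmt4 [Fintype V] [DecidableEq V] (A : V → V → Prop) [DecidableRel A]
    (hloop : Irreflexive A)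
    (n : ℕ) (hcard : Fintype.card V = n) (hn : 3 ≤ n)
    (x : ZMod (n - 1) → V) (hinj : Function.Injective x)
    (hcyc : ∀ i : ZMod (n - 1), A (x i) (x (i + 1)))
    (y : V) (hy : ∀ i : ZMod (n - 1), y ≠ x i)
    (hnb : ¬ HamBypass A)
    (k : ZMod (n - 1)) (hk1 : A (x k) y) (hk2 : A y (x (k + 1))) :
    ∀ i : ZMod (n - 1), x i ≠ x k → ¬ A (x (i + 1)) (x i) := by
  intro i hi hrev
  apply hnb
  haveI : NeZero (n - 1) := ⟨by omega⟩
  have hm2 : 2 ≤ (n - 1) := by omega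
  have hik : i ≠ k := fun h => hi (by rw [h])
  set d := (k - i).val with hd
  have hdm : d < (n - 1) := ZMod.val_lt _
  have hd1 : 1 ≤ d := by
    rcases Nat.eq_zero_or_pos d with h | h
    · exact absurd ((sub_eq_zero.1 ((ZMod.val_eq_zero (k - i)).1 h)).symm) hik
    · exact h
  have hdk : (d : ZMod (n - 1)) = k - i := ZMod.natCast_rightInverse _
  set f : ℕ → V := fun j =>
    if j < d then x (i + 1 + (j : ZMod (n - 1)))
    else if j = d then y
    else x (i + 1 + ((j - 1 : ℕ) : ZMod (n - 1))) with hf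
  have cast_inj : ∀ a b : ℕ, a < (n - 1) → b < (n - 1) → (a : ZMod (n - 1)) = (b : ZMod (n - 1)) → a = b := by
    intro a b ha hb h
    rw [← ZMod.val_cast_of_lt ha, ← ZMod.val_cast_of_lt hb, h]
  -- value of f away from d
  have fval : ∀ j, j ≠ d → j < (n - 1) + 1 → ∃ e, e < (n - 1) ∧ f j = x (i + 1 + (e : ZMod (n - 1))) ∧
      (j < d → e = j) ∧ (d < j → e = j - 1) := by
    intro j hj hjm
    by_cases h : j < d
    · exact ⟨j, by omega, by simp [hf, h], fun _ => rfl, fun h' => by omega⟩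
    · exact ⟨j - 1, by omega, by simp [hf, h, hj], fun h' => by omega, fun _ => rfl⟩
  have hf0 : f 0 = x (i + 1) := by
    have h0 : (0:ℕ) < d := hd1
    simp [hf, h0]
  have hfm : f (n - 1) = x i := by
    have h1 : ¬ ((n - 1) < d) := by omega
    have h2 : (n - 1) ≠ d := by omega
    have h3 : (((n - 1) - 1 : ℕ) : ZMod (n - 1)) = -1 := by
      have : (((n - 1) - 1 : ℕ) : ZMod (n - 1)) = ((n - 1) : ℕ) - 1 := by
        push_cast [Nat.cast_sub (by omega : 1 ≤ (n - 1))]; ring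
      rw [this, ZMod.natCast_self]; ring
    simp only [hf, h1, h2, if_false, h3]
    congr 1; ring
  set l : List V := (List.range ((n - 1) + 1)).map f with hl
  have hnodup : l.Nodup := by
    refine List.Nodup.map_on ?_ List.nodup_range
    intro j1 h1 j2 h2 hfe
    rw [List.mem_range] at h1 h2
    by_cases e1 : j1 = d <;> by_cases e2 : j2 = d
    · omega
    · exfalso
      obtain ⟨e, _, hv, _, _⟩ := fval j2 e2 h2
      apply hy (i + 1 + (e : ZMod (n - 1)))
      rw [← hv, ← hfe]
      simp [hf, e1]
    · exfalso
      obtain ⟨e, _, hv, _, _⟩ := fval j1 e1 h1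
      apply hy (i + 1 + (e : ZMod (n - 1)))
      rw [← hv, hfe]
      simp [hf, e2]
    · obtain ⟨e1', he1m, hv1, hlt1, hgt1⟩ := fval j1 e1 h1
      obtain ⟨e2', he2m, hv2, hlt2, hgt2⟩ := fval j2 e2 h2
      have : e1' = e2' := by
        have := hinj (hv1 ▸ hv2 ▸ (hfe ▸ rfl : f j1 = f j2))
        have h' : (e1' : ZMod (n - 1)) = e2' := by
          have := add_left_cancel this
          exact this
        exact cast_inj _ _ he1m he2m h'
      rcases lt_or_gt_of_ne (fun h => e1 (h ▸ rfl) : j1 ≠ d) with c1 | c1 <;>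
        rcases lt_or_gt_of_ne (fun h => e2 (h ▸ rfl) : j2 ≠ d) with c2 | c2 <;>
        · have := hlt1; have := hgt1; have := hlt2; have := hgt2; omega
  have hlen : l.length = n := by simp [hl]; omega
  refine ⟨l, hnodup, ?_, ?_, x (i + 1), x i, ?_, ?_, hrev⟩
  · -- covers all vertices
    intro v
    have hcardt : l.toFinset.card = Fintype.card V := by
      rw [List.toFinset_card_of_nodup hnodup, hlen, hcard]
    have : l.toFinset = Finset.univ :=
      Finset.eq_univ_of_card _ (by rw [hcardt])
    have : v ∈ l.toFinset := this ▸ Finset.mem_univ v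
    exact List.mem_toFinset.1 this
  · -- chain
    rw [hl, List.Chain', List.isChain_map, List.isChain_range_succ]
    intro j hj
    rcases lt_trichotomy (j + 1) d with h | h | h
    · have hj1 : j < d := by omega
      have : f j = x (i + 1 + (j : ZMod (n - 1))) := by simp [hf, hj1]
      rw [this]
      have : f (j + 1) = x (i + 1 + ((j + 1 : ℕ) : ZMod (n - 1))) := by simp [hf, h]
      rw [this]
      have : (i + 1 + ((j + 1 : ℕ) : ZMod (n - 1))) = (i + 1 + (j : ZMod (n - 1))) + 1 := by
        push_cast; ring
      rw [this]; exact hcyc _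
    · -- j + 1 = d : arc x k → y
      have hj1 : j < d := by omega
      have hfj : f j = x (i + 1 + (j : ZMod (n - 1))) := by simp [hf, hj1]
      have hfj1 : f (j + 1) = y := by simp [hf, h]
      have hjk : i + 1 + (j : ZMod (n - 1)) = k := by
        have : ((j + 1 : ℕ) : ZMod (n - 1)) = (d : ZMod (n - 1)) := by rw [h]
        rw [hdk] at this
        push_cast at this
        have : (j : ZMod (n - 1)) = k - i - 1 := by linear_combination this
        rw [this]; ring
      rw [hfj, hfj1, hjk]; exact hk1
    · -- j ≥ d
      rcases Nat.eq_or_lt_of_le (by omega : d ≤ j) with h' | h'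
      · -- j = d : arc y → x(k+1)
        have hfj : f j = y := by simp [hf, ← h']
        have hfj1 : f (j + 1) = x (i + 1 + ((j : ℕ) : ZMod (n - 1))) := by
          have h1 : ¬ (j + 1 < d) := by omega
          have h2 : j + 1 ≠ d := by omega
          simp [hf, h1, h2]
        have : i + 1 + ((j : ℕ) : ZMod (n - 1)) = k + 1 := by
          rw [← h', hdk]; ring
        rw [hfj, hfj1, this]; exact hk2
      · -- j > d
        have h1 : ¬ (j < d) := by omega
        have h2 : j ≠ d := by omega
        have h3 : ¬ (j + 1 < d) := by omega
        have h4 : j + 1 ≠ d := by omega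
        have hfj : f j = x (i + 1 + ((j - 1 : ℕ) : ZMod (n - 1))) := by simp [hf, h1, h2]
        have hfj1 : f (j + 1) = x (i + 1 + ((j : ℕ) : ZMod (n - 1))) := by simp [hf, h3, h4]
        have : i + 1 + ((j : ℕ) : ZMod (n - 1)) = (i + 1 + ((j - 1 : ℕ) : ZMod (n - 1))) + 1 := by
          have : ((j : ℕ) : ZMod (n - 1)) = ((j - 1 : ℕ) : ZMod (n - 1)) + 1 := by
            have : j = (j - 1) + 1 := by omega
            rw [this]; push_cast; ring
          rw [this]; ring
        rw [hfj, hfj1, this]; exact hcyc _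
  · -- head
    rw [hl, List.range_succ_eq_map, List.map_cons, List.head?_cons, hf0]
  · -- last
    rw [hl, List.range_succ, List.map_append, List.map_singleton,
      List.getLast?_concat, hfm]
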